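/- Let $(A, \mathfrak{m}, k)$ be a noetherian local ring and $(F^\bullet, d^\bullet)$ a cochain complex of free $A$-modules of finite rank. The base change map $\varphi^p \colon H^p(F^\bullet) \otimes_A k \to H^p(F^\bullet \otimes_A k)$ is surjective if and only if $\ker d^p$ is a direct summand of $F^p$ and $\operatorname{im} d^p$ is a direct summand of $F^{p+1}$. -/

import Mathlib

open TensorProduct IsLocalRing

open TensorProduct

section Defs

variable (A : Type*) [CommRing A] (k : Type*) [CommRing k] [Algebra A k]
variable {M0 M1 M2 : Type*} [AddCommGroup M0] [AddCommGroup M1] [AddCommGroup M2]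
  [Module A M0] [Module A M1] [Module A M2]

/-- Cohomology of `M0 → M1 → M2` at the middle spot. -/
abbrev coh (d0 : M0 →ₗ[A] M1) (d1 : M1 →ₗ[A] M2) : Type _ :=
  LinearMap.ker d1 ⧸ (LinearMap.range d0).comap (LinearMap.ker d1).subtype

variable (d0 : M0 →ₗ[A] M1) (d1 : M1 →ₗ[A] M2)

/-- The map on kernels induced by `x ↦ 1 ⊗ x`. -/
noncomputable def kerBaseChange : LinearMap.ker d1 →ₗ[A] LinearMap.ker (d1.baseChange k) :=
  LinearMap.codRestrict ((LinearMap.ker (d1.baseChange k)).restrictScalars A)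
    (((TensorProduct.mk A k M1) 1).comp (LinearMap.ker d1).subtype)
    (fun x => by
      simp [LinearMap.mem_ker, (LinearMap.mem_ker.mp x.2)])

/-- The natural base change map `k ⊗ H(F) → H(F ⊗ k)` on cohomology. -/
noncomputable def cohBaseChange :
    k ⊗[A] coh A d0 d1 →ₗ[k] coh k (d0.baseChange k) (d1.baseChange k) :=
  LinearMap.liftBaseChange k <|
    Submodule.liftQ _
      (((Submodule.mkQ _).restrictScalars A).comp (kerBaseChange A k d1))
      (by
        rintro ⟨x, hx⟩ ⟨y, rfl⟩
        have : kerBaseChange A k d1 ⟨d0 y, hx⟩ ∈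
            (LinearMap.range (d0.baseChange k)).comap
              (LinearMap.ker (d1.baseChange k)).subtype := by
          refine ⟨1 ⊗ₜ y, ?_⟩
          rfl
        simpa [LinearMap.mem_ker, Submodule.Quotient.mk_eq_zero] using this)

end Defs

section Aux

open Function

variable {A : Type*} [CommRing A] {k : Type*} [CommRing k] [Algebra A k]
variable {M0 M1 M2 : Type*} [AddCommGroup M0] [AddCommGroup M1] [AddCommGroup M2]
  [Module A M0] [Module A M1] [Module A M2]

/-- A submodule has a complement iff its inclusion has a retraction. -/
theorem exists_isCompl_iff_retraction {M : Type*} [AddCommGroup M] [Module A M]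
    (p : Submodule A M) :
    (∃ q : Submodule A M, IsCompl p q) ↔
      ∃ f : M →ₗ[A] p, f ∘ₗ p.subtype = LinearMap.id := by
  constructor
  · rintro ⟨q, hq⟩
    refine ⟨p.projectionOnto q hq, ?_⟩
    ext x
    simp [Submodule.projectionOnto_apply_left]
  · rintro ⟨f, hf⟩
    refine ⟨LinearMap.ker f, LinearMap.isCompl_of_proj fun x => ?_⟩
    simpa using DFunLike.congr_fun hf x

variable (d1 : M1 →ₗ[A] M2)

theorem d1_comp_ker_subtype : d1 ∘ₗ (LinearMap.ker d1).subtype = 0 := by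
  ext x
  exact x.2

theorem ker_subtype_baseChange_mem (w : k ⊗[A] LinearMap.ker d1) :
    (LinearMap.ker d1).subtype.baseChange k w ∈ LinearMap.ker (d1.baseChange k) := by
  rw [LinearMap.mem_ker, ← LinearMap.comp_apply, ← LinearMap.baseChange_comp,
    d1_comp_ker_subtype, LinearMap.baseChange_zero, LinearMap.zero_apply]

variable (A k) in
theorem cohBaseChange_baseChange_mkQ (d0 : M0 →ₗ[A] M1)
    (w : k ⊗[A] LinearMap.ker d1) :
    cohBaseChange A k d0 d1
        ((((LinearMap.range d0).comap (LinearMap.ker d1).subtype).mkQ.baseChange k) w) =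
      Submodule.Quotient.mk ⟨(LinearMap.ker d1).subtype.baseChange k w,
        ker_subtype_baseChange_mem d1 w⟩ := by
  induction w using TensorProduct.induction_on with
  | zero =>
      rw [map_zero, map_zero]
      symm
      rw [Submodule.Quotient.mk_eq_zero]
      simp [map_zero]
  | tmul c m =>
      simp only [LinearMap.baseChange_tmul, Submodule.mkQ_apply]
      rw [cohBaseChange, LinearMap.liftBaseChange_tmul]
      simp only [Submodule.liftQ_apply, LinearMap.coe_comp, LinearMap.coe_restrictScalars,
        Function.comp_apply, Submodule.mkQ_apply]
      rw [← Submodule.Quotient.mk_smul]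
      congr 1
      ext
      show c • ((1 : k) ⊗ₜ[A] (m : M1)) = c ⊗ₜ[A] (m : M1)
      rw [TensorProduct.smul_tmul', smul_eq_mul, mul_one]
  | add x y hx hy =>
      rw [map_add, map_add, hx, hy, ← Submodule.Quotient.mk_add]
      congr 1
      ext
      simp [map_add]

variable (A k) in
/-- Bridge: surjectivity of the cohomology base change map is equivalent to the statement
that the base-changed kernel inclusion hits all of the kernel of the base-changed map. -/
theorem surjective_cohBaseChange_iff (d0 : M0 →ₗ[A] M1) (hc : d1 ∘ₗ d0 = 0) :
    Function.Surjective (cohBaseChange A k d0 d1) ↔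
      LinearMap.ker (d1.baseChange k) ≤
        LinearMap.range ((LinearMap.ker d1).subtype.baseChange k) := by
  set K := LinearMap.ker d1
  set q := ((LinearMap.range d0).comap K.subtype).mkQ
  have hd0K : ∀ y, d0 y ∈ K := fun y => by
    simpa [K, LinearMap.mem_ker] using DFunLike.congr_fun hc y
  have hd0fact : d0 = K.subtype ∘ₗ d0.codRestrict K hd0K := by ext; rfl
  have hrange : LinearMap.range (d0.baseChange k) ≤
      LinearMap.range (K.subtype.baseChange k) := by
    rintro x ⟨y, rfl⟩
    exact ⟨(d0.codRestrict K hd0K).baseChange k y, by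
      rw [← LinearMap.comp_apply, ← LinearMap.baseChange_comp, ← hd0fact]⟩
  constructor
  · intro hsurj x hx
    obtain ⟨y, hy⟩ := hsurj (Submodule.Quotient.mk ⟨x, hx⟩)
    have hqsurj : Function.Surjective (q.baseChange k) := by
      have : Function.Surjective (q.lTensor k) :=
        LinearMap.lTensor_surjective k (Submodule.mkQ_surjective _)
      rwa [LinearMap.baseChange_eq_ltensor]
    obtain ⟨w, rfl⟩ := hqsurj y
    rw [cohBaseChange_baseChange_mkQ A k d1 d0 w] at hy
    have := (Submodule.Quotient.eq _).mp hy
    rw [Submodule.mem_comap] at this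
    have hxw : K.subtype.baseChange k w - x ∈ LinearMap.range (d0.baseChange k) := by
      simpa using this
    obtain ⟨z, hz⟩ := hrange hxw
    refine ⟨w - z, ?_⟩
    rw [map_sub, hz]
    abel
  · intro hle ξ
    obtain ⟨⟨x, hx⟩, rfl⟩ := Submodule.Quotient.mk_surjective _ ξ
    obtain ⟨w, hw⟩ := hle hx
    refine ⟨q.baseChange k w, ?_⟩
    rw [cohBaseChange_baseChange_mkQ A k d1 d0 w]
    congr 1
    exact Subtype.ext hw

end Aux


section Main

set_option linter.unusedSectionVars false

open Function

variable {A : Type*} [CommRing A] [IsLocalRing A]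
variable {F1 F2 : Type*} [AddCommGroup F1] [AddCommGroup F2] [Module A F1] [Module A F2]
variable (d1 : F1 →ₗ[A] F2)

theorem subtype_comp_rangeRestrict' :
    (LinearMap.range d1).subtype ∘ₗ d1.rangeRestrict = d1 := by
  ext; rfl

theorem rangeRestrict_comp_ker_subtype' :
    d1.rangeRestrict ∘ₗ (LinearMap.ker d1).subtype = 0 := by
  ext ⟨x, hx⟩
  exact hx

/-- If the image of `d1` is projective, the inclusion of `ker d1` admits a retraction `p`
such that `ι ∘ p = id - s ∘ d1'` for a section `s` of the corestriction `d1'`. -/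
theorem exists_ker_retraction [Module.Projective A (LinearMap.range d1)] :
    ∃ (p : F1 →ₗ[A] LinearMap.ker d1) (s : ↥(LinearMap.range d1) →ₗ[A] F1),
      (LinearMap.ker d1).subtype ∘ₗ p = LinearMap.id - s ∘ₗ d1.rangeRestrict ∧
      p ∘ₗ (LinearMap.ker d1).subtype = LinearMap.id := by
  obtain ⟨s, hs⟩ := Module.projective_lifting_property d1.rangeRestrict LinearMap.id
    d1.surjective_rangeRestrict
  have hds : ∀ y : LinearMap.range d1, d1 (s y) = (y : F2) := fun y =>
    congrArg Subtype.val (DFunLike.congr_fun hs y)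
  have hmem : ∀ x : F1,
      (LinearMap.id (R := A) (M := F1) - s ∘ₗ d1.rangeRestrict) x ∈ LinearMap.ker d1 := by
    intro x
    rw [LinearMap.mem_ker, LinearMap.sub_apply, LinearMap.id_apply, LinearMap.comp_apply,
      map_sub, hds (d1.rangeRestrict x)]
    simp
  refine ⟨LinearMap.codRestrict _ _ hmem, s, LinearMap.subtype_comp_codRestrict _ _ _, ?_⟩
  ext ⟨x, hx⟩
  have h2 : d1.rangeRestrict x = 0 := Subtype.ext hx
  show (LinearMap.id (R := A) (M := F1) - s ∘ₗ d1.rangeRestrict) x = x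
  rw [LinearMap.sub_apply, LinearMap.id_apply, LinearMap.comp_apply, h2, map_zero, sub_zero]

theorem compl_ker_of_compl_range [Module.Projective A F2]
    (h : ∃ U : Submodule A F2, IsCompl (LinearMap.range d1) U) :
    ∃ W : Submodule A F1, IsCompl (LinearMap.ker d1) W := by
  rw [exists_isCompl_iff_retraction] at h ⊢
  obtain ⟨f, hf⟩ := h
  have : Module.Projective A (LinearMap.range d1) := Module.Projective.of_split _ _ hf
  obtain ⟨p, s, -, hp2⟩ := exists_ker_retraction d1
  exact ⟨p, hp2⟩

theorem ker_le_range_iff [IsNoetherianRing A]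
    [Module.Finite A F1] [Module.Free A F1] [Module.Finite A F2] [Module.Free A F2] :
    (LinearMap.ker (d1.baseChange (IsLocalRing.ResidueField A)) ≤
        LinearMap.range ((LinearMap.ker d1).subtype.baseChange (IsLocalRing.ResidueField A))) ↔
      Injective ((LinearMap.range d1).subtype.lTensor (IsLocalRing.ResidueField A)) := by
  have hbcfun : ⇑((LinearMap.range d1).subtype.baseChange (IsLocalRing.ResidueField A)) =
      ⇑((LinearMap.range d1).subtype.lTensor (IsLocalRing.ResidueField A)) :=
    LinearMap.baseChange_eq_ltensor _
  have hsurj : Surjective (d1.rangeRestrict.baseChange (IsLocalRing.ResidueField A)) := by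
    have := LinearMap.lTensor_surjective (IsLocalRing.ResidueField A)
      d1.surjective_rangeRestrict
    rwa [← LinearMap.baseChange_eq_ltensor] at this
  constructor
  · intro hle
    rw [← hbcfun]
    refine (injective_iff_map_eq_zero _).mpr fun x hx => ?_
    obtain ⟨y, rfl⟩ := hsurj x
    have hyk : y ∈ LinearMap.ker (d1.baseChange (IsLocalRing.ResidueField A)) := by
      rw [LinearMap.mem_ker, ← subtype_comp_rangeRestrict' d1]
      rw [LinearMap.baseChange_comp, LinearMap.comp_apply]
      exact hx
    obtain ⟨z, rfl⟩ := hle hyk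
    rw [← LinearMap.comp_apply, ← LinearMap.baseChange_comp,
      rangeRestrict_comp_ker_subtype', LinearMap.baseChange_zero, LinearMap.zero_apply]
  · intro hinj
    have hinj' : Injective ((LinearMap.range d1).subtype.baseChange
        (IsLocalRing.ResidueField A)) := by
      rw [hbcfun]; exact hinj
    have : Module.Projective A (LinearMap.range d1) := by
      obtain ⟨l', hl'⟩ :=
        (IsLocalRing.split_injective_iff_lTensor_residueField_injective
          (LinearMap.range d1).subtype).mpr hinj
      exact Module.Projective.of_split _ _ hl'
    obtain ⟨p, s, hp1, -⟩ := exists_ker_retraction d1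
    intro y hy
    have h0 : d1.rangeRestrict.baseChange (IsLocalRing.ResidueField A) y = 0 := by
      apply hinj'
      rw [map_zero, ← LinearMap.comp_apply, ← LinearMap.baseChange_comp,
        subtype_comp_rangeRestrict' d1]
      exact hy
    refine ⟨p.baseChange _ y, ?_⟩
    rw [← LinearMap.comp_apply, ← LinearMap.baseChange_comp, hp1, LinearMap.baseChange_sub,
      LinearMap.baseChange_id, LinearMap.sub_apply, LinearMap.id_apply,
      LinearMap.baseChange_comp, LinearMap.comp_apply, h0, map_zero, sub_zero]

end Main

theorem stmt5 {A : Type*} [CommRing A] [IsLocalRing A] [IsNoetherianRing A]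
    {F0 : Type*} [AddCommGroup F0] [Module A F0] [Module.Free A F0] [Module.Finite A F0]
    {F1 : Type*} [AddCommGroup F1] [Module A F1] [Module.Free A F1] [Module.Finite A F1]
    {F2 : Type*} [AddCommGroup F2] [Module A F2] [Module.Free A F2] [Module.Finite A F2]
    (d0 : F0 →ₗ[A] F1) (d1 : F1 →ₗ[A] F2) (hc : d1 ∘ₗ d0 = 0) :
    Function.Surjective (cohBaseChange A (ResidueField A) d0 d1) ↔
      (∃ W : Submodule A F1, IsCompl (LinearMap.ker d1) W) ∧
      (∃ U : Submodule A F2, IsCompl (LinearMap.range d1) U) := by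
  rw [surjective_cohBaseChange_iff A (ResidueField A) d1 d0 hc, ker_le_range_iff d1]
  constructor
  · intro hinj
    have hU : ∃ U : Submodule A F2, IsCompl (LinearMap.range d1) U := by
      rw [exists_isCompl_iff_retraction]
      exact (IsLocalRing.split_injective_iff_lTensor_residueField_injective _).mpr hinj
    exact ⟨compl_ker_of_compl_range d1 hU, hU⟩
  · rintro ⟨-, hU⟩
    rw [exists_isCompl_iff_retraction] at hU
    exact (IsLocalRing.split_injective_iff_lTensor_residueField_injective _).mp hU
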